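/- Let V = U^⊤U for the network design matrix U (n ≥ 3) and S̆ its block approximation with entries s̆_{ij} = (δ_{ij}+1)/(n−1) on diagonal blocks and −1/(n−1) off. Then max_{i,j} |(V^{-1} − S̆)(I − V S̆)|_{ij} ≤ C/(n−1)² for some absolute constant C, using ‖V^{-1} − S̆‖_max ≤ C₀/(n−1)² and ‖S̆(I − V S̆)‖_max ≤ 2/(n−1)². -/

import Mathlib

open Matrix

noncomputable def Umat (n : ℕ) : Matrix (Fin n × Fin n) (Fin n ⊕ Fin (n - 1)) ℝ :=
  fun p c =>
    if p.1 = p.2 then 0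
    else
      match c with
      | Sum.inl k => if k = p.1 then 1 else 0
      | Sum.inr l => if (p.2 : ℕ) = (l : ℕ) then 1 else 0

noncomputable def Vmat (n : ℕ) : Matrix (Fin n ⊕ Fin (n - 1)) (Fin n ⊕ Fin (n - 1)) ℝ :=
  (Umat n)ᵀ * Umat n

noncomputable def breveS (n : ℕ) : Matrix (Fin n ⊕ Fin (n - 1)) (Fin n ⊕ Fin (n - 1)) ℝ :=
  fun a b =>
    match a, b with
    | Sum.inl i, Sum.inl j => ((if i = j then (1:ℝ) else 0) + 1) / ((n : ℝ) - 1)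
    | Sum.inr l, Sum.inr l' => ((if l = l' then (1:ℝ) else 0) + 1) / ((n : ℝ) - 1)
    | Sum.inl _, Sum.inr _ => -1 / ((n : ℝ) - 1)
    | Sum.inr _, Sum.inl _ => -1 / ((n : ℝ) - 1)

noncomputable def Vmat2 (m : ℕ) : Matrix (Fin (m+1) ⊕ Fin m) (Fin (m+1) ⊕ Fin m) ℝ :=
  Vmat (m+1)

lemma sum_ite_const (N : ℕ) (b : Fin N) (x y : ℝ) :
    ∑ k : Fin N, (if k = b then x else y) = x + ((N:ℝ) - 1) * y := by
  have h : ∀ k : Fin N, (if k = b then x else y) = y + (if k = b then x - y else 0) := by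
    intro k; split <;> ring
  simp only [h, Finset.sum_add_distrib, Finset.sum_const, Finset.sum_ite_eq',
    Finset.mem_univ, if_true, Finset.card_univ, Fintype.card_fin, nsmul_eq_mul]
  ring

lemma V_ll (m : ℕ) (i j : Fin (m+1)) :
    Vmat2 m (Sum.inl i) (Sum.inl j) = if i = j then (m:ℝ) else 0 := by
  rw [Vmat2, Vmat, Matrix.mul_apply]
  simp only [Matrix.transpose_apply, Umat]
  rw [Fintype.sum_prod_type]
  have inner : ∀ a : Fin (m+1),
      (∑ b : Fin (m+1), (if (a, b).1 = (a, b).2 then 0 else if i = (a, b).1 then 1 else 0) *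
          if (a, b).1 = (a, b).2 then 0 else if j = (a, b).1 then (1:ℝ) else 0)
      = if a = i then (if i = j then (m:ℝ) else 0) else 0 := by
    intro a
    have h : ∀ b : Fin (m+1),
        ((if (a, b).1 = (a, b).2 then 0 else if i = (a, b).1 then 1 else 0) *
          if (a, b).1 = (a, b).2 then 0 else if j = (a, b).1 then (1:ℝ) else 0)
        = (if b = a then 0 else if a = i then (if i = j then 1 else 0) else 0) := by
      intro b; simp only
      rcases eq_or_ne a b with rfl | hab
      · simp
      · rw [if_neg hab, if_neg hab, if_neg (Ne.symm hab)]
        by_cases h1 : i = a <;> by_cases h2 : j = a <;> by_cases h3 : i = j <;> simp_all [eq_comm]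
    rw [Finset.sum_congr rfl (fun b _ => h b), sum_ite_const]
    push_cast; split_ifs <;> ring
  rw [Finset.sum_congr rfl (fun a _ => inner a), Finset.sum_ite_eq' Finset.univ i]
  simp

lemma sum_avoid {N : ℕ} (a : Fin N) (g : Fin N → ℝ) :
    ∑ b : Fin N, (if b = a then 0 else g b) = (∑ b, g b) - g a := by
  have h : ∀ b : Fin N, (if b = a then 0 else g b) = g b - (if b = a then g b else 0) := by
    intro b; split <;> simp_all
  simp [h, Finset.sum_sub_distrib]

lemma val_eq_iff (m : ℕ) (k : Fin (m+1)) (l : Fin m) : ((k:ℕ) = (l:ℕ)) ↔ k = Fin.castSucc l := by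
  rw [Fin.ext_iff]; simp

lemma val_eq_iff' (m : ℕ) (k : Fin (m+1)) (l : Fin m) : ((l:ℕ) = (k:ℕ)) ↔ k = Fin.castSucc l := by
  rw [Fin.ext_iff]; simp [eq_comm]

lemma V_lr (m : ℕ) (i : Fin (m+1)) (l : Fin m) :
    Vmat2 m (Sum.inl i) (Sum.inr l) = if (i:ℕ) = (l:ℕ) then 0 else 1 := by
  rw [Vmat2, Vmat, Matrix.mul_apply]
  simp only [Matrix.transpose_apply, Umat]
  rw [Fintype.sum_prod_type]
  have inner : ∀ a : Fin (m+1),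
      (∑ b : Fin (m+1), (if (a, b).1 = (a, b).2 then 0 else if i = (a, b).1 then 1 else 0) *
          if (a, b).1 = (a, b).2 then 0 else if ((a, b).2 : ℕ) = (l:ℕ) then (1:ℝ) else 0)
      = if a = i then (1 - if a = Fin.castSucc l then 1 else 0) else 0 := by
    intro a
    have h : ∀ b : Fin (m+1),
        ((if (a, b).1 = (a, b).2 then 0 else if i = (a, b).1 then 1 else 0) *
          if (a, b).1 = (a, b).2 then 0 else if ((a, b).2 : ℕ) = (l:ℕ) then (1:ℝ) else 0)
        = (if b = a then 0 else
            (if a = i then 1 else 0) * (if b = Fin.castSucc l then 1 else 0)) := by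
      intro b; simp only
      rcases eq_or_ne a b with rfl | hab
      · simp
      · rw [if_neg hab, if_neg hab, if_neg (Ne.symm hab)]
        by_cases h1 : i = a <;> by_cases h2 : (b:ℕ) = (l:ℕ) <;>
          simp_all [val_eq_iff, val_eq_iff', eq_comm]
    rw [Finset.sum_congr rfl (fun b _ => h b), sum_avoid]
    rw [← Finset.mul_sum, Finset.sum_ite_eq' Finset.univ (Fin.castSucc l)]
    simp only [Finset.mem_univ, if_true]
    by_cases h1 : a = i <;> by_cases h2 : a = Fin.castSucc l <;> simp_all
  rw [Finset.sum_congr rfl (fun a _ => inner a), Finset.sum_ite_eq' Finset.univ i]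
  simp only [Finset.mem_univ, if_true, val_eq_iff]
  split <;> simp_all

lemma V_rr (m : ℕ) (l l' : Fin m) :
    Vmat2 m (Sum.inr l) (Sum.inr l') = if l = l' then (m:ℝ) else 0 := by
  rw [Vmat2, Vmat, Matrix.mul_apply]
  simp only [Matrix.transpose_apply, Umat]
  rw [Fintype.sum_prod_type]
  have inner : ∀ a : Fin (m+1),
      (∑ b : Fin (m+1), (if (a, b).1 = (a, b).2 then 0 else if ((a, b).2 : ℕ) = (l:ℕ) then 1 else 0) *
          if (a, b).1 = (a, b).2 then 0 else if ((a, b).2 : ℕ) = (l':ℕ) then (1:ℝ) else 0)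
      = (if l = l' then 1 else 0) * (1 - if a = Fin.castSucc l then 1 else 0) := by
    intro a
    have h : ∀ b : Fin (m+1),
        ((if (a, b).1 = (a, b).2 then 0 else if ((a, b).2 : ℕ) = (l:ℕ) then 1 else 0) *
          if (a, b).1 = (a, b).2 then 0 else if ((a, b).2 : ℕ) = (l':ℕ) then (1:ℝ) else 0)
        = (if b = a then 0 else
            (if l = l' then 1 else 0) * (if b = Fin.castSucc l then 1 else 0)) := by
      intro b; simp only
      rcases eq_or_ne a b with rfl | hab
      · simp
      · rw [if_neg hab, if_neg hab, if_neg (Ne.symm hab)]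
        by_cases h1 : (b:ℕ) = (l:ℕ) <;> by_cases h2 : (b:ℕ) = (l':ℕ) <;> by_cases h3 : l = l' <;>
          simp_all [val_eq_iff, val_eq_iff', Fin.castSucc_inj, Fin.val_inj, eq_comm]
    rw [Finset.sum_congr rfl (fun b _ => h b), sum_avoid]
    rw [← Finset.mul_sum, Finset.sum_ite_eq' Finset.univ (Fin.castSucc l)]
    simp only [Finset.mem_univ, if_true]
    ring
  rw [Finset.sum_congr rfl (fun a _ => inner a)]
  rw [← Finset.mul_sum]
  rw [Finset.sum_sub_distrib, Finset.sum_const, Finset.sum_ite_eq' Finset.univ (Fin.castSucc l)]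
  simp only [Finset.mem_univ, if_true, Finset.card_univ, Fintype.card_fin, nsmul_eq_mul]
  push_cast
  split <;> ring

lemma V_rl (m : ℕ) (l : Fin m) (i : Fin (m+1)) :
    Vmat2 m (Sum.inr l) (Sum.inl i) = if (i:ℕ) = (l:ℕ) then 0 else 1 := by
  have hsym : (Vmat (m+1))ᵀ = Vmat (m+1) := by
    rw [Vmat, Matrix.transpose_mul, Matrix.transpose_transpose]
  have h2 : Vmat2 m (Sum.inr l) (Sum.inl i) = (Vmat (m+1))ᵀ (Sum.inl i) (Sum.inr l) := rfl
  rw [h2, hsym]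
  exact V_lr m i l

noncomputable def Wmat (m : ℕ) : Matrix (Fin (m+1) ⊕ Fin m) (Fin (m+1) ⊕ Fin m) ℝ :=
  fun a b =>
    match a, b with
    | Sum.inl i, Sum.inl j =>
        if i = Fin.last m then
          (if j = Fin.last m then (2*(m:ℝ)-1)/((m:ℝ)*((m:ℝ)-1)) else 1/(m:ℝ))
        else if j = Fin.last m then 1/(m:ℝ)
        else ((m:ℝ)^2-(m:ℝ)-1)/((m:ℝ)*((m:ℝ)^2-1)) + (if i = j then (m:ℝ)/((m:ℝ)^2-1) else 0)
    | Sum.inl i, Sum.inr l =>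
        if i = Fin.last m then -1/((m:ℝ)-1)
        else -(m:ℝ)/((m:ℝ)^2-1) + (if (i:ℕ) = (l:ℕ) then 1/((m:ℝ)^2-1) else 0)
    | Sum.inr l, Sum.inl j =>
        if j = Fin.last m then -1/((m:ℝ)-1)
        else -(m:ℝ)/((m:ℝ)^2-1) + (if (j:ℕ) = (l:ℕ) then 1/((m:ℝ)^2-1) else 0)
    | Sum.inr l, Sum.inr l' => (m:ℝ)/((m:ℝ)^2-1) + (if l = l' then (m:ℝ)/((m:ℝ)^2-1) else 0)

lemma castSucc_ne_last (m : ℕ) (l : Fin m) : Fin.castSucc l ≠ Fin.last m :=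
  (Fin.castSucc_lt_last l).ne

lemma cond_pred (m : ℕ) (j : Fin (m+1)) (hj : j ≠ Fin.last m) (l : Fin m) :
    ((j:ℕ) = (l:ℕ)) ↔ l = j.castPred hj := by
  rw [Fin.ext_iff, Fin.coe_castPred]; omega

lemma cond_castSucc (m : ℕ) (j : Fin (m+1)) (hj : j ≠ Fin.last m) (k : Fin m) :
    (Fin.castSucc k = j) ↔ k = j.castPred hj := by
  rw [Fin.ext_iff, Fin.ext_iff, Fin.coe_castSucc, Fin.coe_castPred]

lemma rowsum_W_rl_last (m : ℕ) :
    ∑ l : Fin m, Wmat m (Sum.inr l) (Sum.inl (Fin.last m)) = (m:ℝ) * (-1/((m:ℝ)-1)) := by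
  simp [Wmat, Finset.sum_const, Fintype.card_fin]

lemma rowsum_W_rl (m : ℕ) (j : Fin (m+1)) (hj : j ≠ Fin.last m) :
    ∑ l : Fin m, Wmat m (Sum.inr l) (Sum.inl j)
      = (m:ℝ) * (-(m:ℝ)/((m:ℝ)^2-1)) + 1/((m:ℝ)^2-1) := by
  simp only [Wmat, if_neg hj, cond_pred m j hj]
  rw [Finset.sum_add_distrib, Finset.sum_const, Finset.sum_ite_eq' Finset.univ (j.castPred hj)]
  simp [Finset.card_univ, Fintype.card_fin]

lemma rowsum_W_rr (m : ℕ) (l' : Fin m) :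
    ∑ l : Fin m, Wmat m (Sum.inr l) (Sum.inr l')
      = (m:ℝ) * ((m:ℝ)/((m:ℝ)^2-1)) + (m:ℝ)/((m:ℝ)^2-1) := by
  simp only [Wmat]
  rw [Finset.sum_add_distrib, Finset.sum_const]
  have : ∀ l : Fin m, (if l = l' then (m:ℝ)/((m:ℝ)^2-1) else 0)
      = (if l = l' then (m:ℝ)/((m:ℝ)^2-1) else 0) := fun _ => rfl
  rw [Finset.sum_ite_eq' Finset.univ l']
  simp [Finset.card_univ, Fintype.card_fin]

lemma rowsum_W_ll_last (m : ℕ) :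
    ∑ k : Fin (m+1), Wmat m (Sum.inl k) (Sum.inl (Fin.last m))
      = (2*(m:ℝ)-1)/((m:ℝ)*((m:ℝ)-1)) + (m:ℝ) * (1/(m:ℝ)) := by
  rw [Fin.sum_univ_castSucc]
  simp [Wmat, castSucc_ne_last, Finset.sum_const, Fintype.card_fin]
  ring

lemma rowsum_W_ll (m : ℕ) (j : Fin (m+1)) (hj : j ≠ Fin.last m) :
    ∑ k : Fin (m+1), Wmat m (Sum.inl k) (Sum.inl j)
      = 1/(m:ℝ) + (m:ℝ)*(((m:ℝ)^2-(m:ℝ)-1)/((m:ℝ)*((m:ℝ)^2-1))) + (m:ℝ)/((m:ℝ)^2-1) := by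
  rw [Fin.sum_univ_castSucc]
  simp only [Wmat, if_neg hj, castSucc_ne_last, if_false, if_pos,
    cond_castSucc m j hj]
  rw [Finset.sum_add_distrib, Finset.sum_const, Finset.sum_ite_eq' Finset.univ (j.castPred hj)]
  simp [Finset.card_univ, Fintype.card_fin]
  ring

lemma rowsum_W_lr (m : ℕ) (l' : Fin m) :
    ∑ k : Fin (m+1), Wmat m (Sum.inl k) (Sum.inr l')
      = -1/((m:ℝ)-1) + (m:ℝ)*(-(m:ℝ)/((m:ℝ)^2-1)) + 1/((m:ℝ)^2-1) := by
  rw [Fin.sum_univ_castSucc]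
  have hcond : ∀ k : Fin m, ((Fin.castSucc k : ℕ) = (l':ℕ)) ↔ k = l' := by
    intro k; rw [Fin.ext_iff]; simp
  simp only [Wmat, castSucc_ne_last, if_false, if_pos, hcond]
  rw [Finset.sum_add_distrib, Finset.sum_const, Finset.sum_ite_eq' Finset.univ l']
  simp [Finset.card_univ, Fintype.card_fin]
  ring

lemma sum_scaled {N : ℕ} (i : Fin N) (cc : ℝ) (f : Fin N → ℝ) :
    ∑ k : Fin N, (if i = k then cc else 0) * f k = cc * f i := by
  simp [ite_mul, Finset.sum_ite_eq]

lemma sum_mask_down_last (m : ℕ) (f : Fin m → ℝ) :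
    ∑ l : Fin m, (if ((Fin.last m : Fin (m+1)):ℕ) = (l:ℕ) then 0 else 1) * f l
      = ∑ l : Fin m, f l := by
  apply Finset.sum_congr rfl
  intro l _
  rw [if_neg, one_mul]
  simp only [Fin.val_last]
  omega

lemma sum_mask_down (m : ℕ) (i : Fin (m+1)) (hi : i ≠ Fin.last m) (f : Fin m → ℝ) :
    ∑ l : Fin m, (if (i:ℕ) = (l:ℕ) then 0 else 1) * f l
      = (∑ l : Fin m, f l) - f (i.castPred hi) := by
  have h : ∀ l : Fin m, (if (i:ℕ) = (l:ℕ) then (0:ℝ) else 1) * f l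
      = f l - (if l = i.castPred hi then f l else 0) := by
    intro l
    have hiff : ((i:ℕ) = (l:ℕ)) ↔ l = i.castPred hi := by
      rw [Fin.ext_iff]
      simp [Fin.coe_castPred]
      omega
    by_cases hl : l = i.castPred hi
    · rw [if_pos (hiff.2 hl), if_pos hl]; ring
    · rw [if_neg (fun h => hl (hiff.1 h)), if_neg hl]; ring
  simp [h, Finset.sum_sub_distrib]

lemma sum_mask_up (m : ℕ) (l : Fin m) (f : Fin (m+1) → ℝ) :
    ∑ k : Fin (m+1), (if (k:ℕ) = (l:ℕ) then 0 else 1) * f k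
      = (∑ k : Fin (m+1), f k) - f (Fin.castSucc l) := by
  have h : ∀ k : Fin (m+1), (if (k:ℕ) = (l:ℕ) then (0:ℝ) else 1) * f k
      = f k - (if k = Fin.castSucc l then f k else 0) := by
    intro k
    by_cases hk : k = Fin.castSucc l
    · subst hk; simp
    · rw [if_neg (fun h => hk ((val_eq_iff m k l).1 h)), if_neg hk]; ring
  simp [h, Finset.sum_sub_distrib]

lemma cond_pred' (m : ℕ) (i : Fin (m+1)) (hi : i ≠ Fin.last m) (j : Fin (m+1)) :
    ((j:ℕ) = ((i.castPred hi : Fin m):ℕ)) ↔ i = j := by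
  rw [Fin.coe_castPred, Fin.ext_iff]; omega

theorem VW (m : ℕ) (hm : 2 ≤ m) : Vmat2 m * Wmat m = 1 := by
  have hc : (2:ℝ) ≤ (m:ℝ) := by exact_mod_cast hm
  have h0 : (m:ℝ) ≠ 0 := by linarith
  have h1 : (m:ℝ) - 1 ≠ 0 := by linarith
  have h2 : (m:ℝ) + 1 ≠ 0 := by linarith
  have hq : (m:ℝ)^2 - 1 ≠ 0 := by
    have : (m:ℝ)^2 - 1 = ((m:ℝ)-1)*((m:ℝ)+1) := by ring
    rw [this]; exact mul_ne_zero h1 h2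
  ext a b
  rw [Matrix.mul_apply, Fintype.sum_sum_type]
  rcases a with i | l <;> rcases b with j | l'
  · -- (inl i, inl j)
    simp only [V_ll, V_lr, Matrix.one_apply, Sum.inl.injEq]
    rw [sum_scaled]
    by_cases hi : i = Fin.last m
    · subst hi
      rw [sum_mask_down_last]
      by_cases hj : j = Fin.last m
      · subst hj
        rw [rowsum_W_rl_last]
        simp only [Wmat, if_pos rfl, if_pos rfl, if_true]
        (field_simp; try ring)
      · rw [rowsum_W_rl m j hj]
        rw [if_neg (show ¬(Fin.last m = j) from fun h => hj h.symm)]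
        simp only [Wmat, if_pos rfl, if_neg hj, if_true]
        (field_simp; try ring)
    · rw [sum_mask_down m i hi]
      by_cases hj : j = Fin.last m
      · subst hj
        rw [rowsum_W_rl_last]
        rw [if_neg (show ¬(i = Fin.last m) from hi)]
        simp only [Wmat, if_neg hi, if_pos rfl, if_true]
        (field_simp; try ring)
      · rw [rowsum_W_rl m j hj]
        simp only [Wmat, if_neg hi, if_neg hj, cond_pred' m i hi]
        by_cases hij : i = j <;> simp only [hij, if_pos rfl, if_true, if_neg, hij, if_false] <;>
          [skip; skip] <;> (field_simp; try ring) <;> ring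
  · -- (inl i, inr l')
    simp only [V_ll, V_lr, Matrix.one_apply, reduceCtorEq, if_false]
    rw [sum_scaled]
    by_cases hi : i = Fin.last m
    · subst hi
      rw [sum_mask_down_last, rowsum_W_rr]
      simp only [Wmat, if_pos rfl, if_true]
      (field_simp; try ring)
    · rw [sum_mask_down m i hi, rowsum_W_rr]
      simp only [Wmat, if_neg hi]
      have hcp : (i.castPred hi = l') ↔ ((i:ℕ) = (l':ℕ)) := by
        rw [Fin.ext_iff, Fin.coe_castPred]
      by_cases hd : (i:ℕ) = (l':ℕ)
      · rw [if_pos hd, if_pos (hcp.2 hd)]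
        (field_simp; try ring)
      · rw [if_neg hd, if_neg (fun h => hd (hcp.1 h))]
        (field_simp; try ring)
  · -- (inr l, inl j)
    simp only [V_rl, V_rr, Matrix.one_apply, reduceCtorEq, if_false]
    rw [sum_scaled, sum_mask_up]
    by_cases hj : j = Fin.last m
    · subst hj
      rw [rowsum_W_ll_last]
      simp only [Wmat, castSucc_ne_last, if_false, if_pos rfl, if_true]
      (field_simp; try ring)
    · rw [rowsum_W_ll m j hj]
      simp only [Wmat, castSucc_ne_last, if_false, if_neg hj]
      have hcs : (Fin.castSucc l = j) ↔ ((j:ℕ) = (l:ℕ)) := by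
        rw [Fin.ext_iff, Fin.coe_castSucc]
        exact eq_comm
      by_cases hd : (j:ℕ) = (l:ℕ)
      · rw [if_pos hd, if_pos (hcs.2 hd)]
        (field_simp; try ring)
      · rw [if_neg hd, if_neg (fun h => hd (hcs.1 h))]
        (field_simp; try ring)
  · -- (inr l, inr l')
    simp only [V_rl, V_rr, Matrix.one_apply, Sum.inr.injEq]
    rw [sum_scaled, sum_mask_up, rowsum_W_lr]
    simp only [Wmat, castSucc_ne_last, if_false]
    have hcs : ((Fin.castSucc l : ℕ) = (l':ℕ)) ↔ l = l' := by
      rw [Fin.coe_castSucc, ← Fin.ext_iff]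
    by_cases hd : l = l'
    · rw [if_pos (hcs.2 hd), if_pos hd, if_pos hd]
      (field_simp; try ring)
    · rw [if_neg (fun h => hd (hcs.1 h)), if_neg hd, if_neg hd]
      (field_simp; try ring)

noncomputable def S2 (m : ℕ) : Matrix (Fin (m+1) ⊕ Fin m) (Fin (m+1) ⊕ Fin m) ℝ :=
  breveS (m+1)

lemma S2_ll (m : ℕ) (i j : Fin (m+1)) :
    S2 m (Sum.inl i) (Sum.inl j) = ((if i = j then (1:ℝ) else 0) + 1) / (m:ℝ) := by
  simp only [S2, breveS]
  push_cast
  ring_nf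

lemma S2_lr (m : ℕ) (i : Fin (m+1)) (l : Fin m) :
    S2 m (Sum.inl i) (Sum.inr l) = -1 / (m:ℝ) := by
  simp only [S2, breveS]
  push_cast
  ring_nf

lemma S2_rl (m : ℕ) (l : Fin m) (j : Fin (m+1)) :
    S2 m (Sum.inr l) (Sum.inl j) = -1 / (m:ℝ) := by
  simp only [S2, breveS]
  push_cast
  ring_nf

lemma S2_rr (m : ℕ) (l l' : Fin m) :
    S2 m (Sum.inr l) (Sum.inr l') = ((if l = l' then (1:ℝ) else 0) + 1) / (m:ℝ) := by
  simp only [S2, breveS]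
  push_cast
  ring_nf

lemma sum_deltaplus {N : ℕ} (j : Fin N) (cr : ℝ) :
    ∑ k : Fin N, ((if k = j then (1:ℝ) else 0) + 1)/cr = 1/cr + (N:ℝ)/cr := by
  have h : ∀ k : Fin N, ((if k = j then (1:ℝ) else 0) + 1)/cr
      = (if k = j then 1/cr else 0) + 1/cr := by
    intro k; split <;> ring
  rw [Finset.sum_congr rfl (fun k _ => h k), Finset.sum_add_distrib, Finset.sum_const,
    Finset.sum_ite_eq' Finset.univ j]
  simp [Finset.card_univ, nsmul_eq_mul]
  ring

lemma M_ll (m : ℕ) (hm : 2 ≤ m) (i j : Fin (m+1)) :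
    (1 - Vmat2 m * S2 m) (Sum.inl i) (Sum.inl j)
      = if i = Fin.last m then 0 else -1/(m:ℝ) := by
  have h0 : (m:ℝ) ≠ 0 := Nat.cast_ne_zero.mpr (by omega)
  rw [Matrix.sub_apply, Matrix.mul_apply, Fintype.sum_sum_type]
  simp only [V_ll, V_lr, S2_ll, S2_rl]
  rw [sum_scaled]
  by_cases hi : i = Fin.last m
  · subst hi
    rw [sum_mask_down_last, Finset.sum_const, if_pos rfl]
    simp only [Matrix.one_apply, Sum.inl.injEq, Finset.card_univ, Fintype.card_fin,
      nsmul_eq_mul]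
    by_cases hj : Fin.last m = j
    · rw [if_pos hj]; (field_simp; try ring)
    · rw [if_neg hj]; (field_simp; try ring)
  · rw [sum_mask_down m i hi, Finset.sum_const, if_neg hi]
    simp only [Matrix.one_apply, Sum.inl.injEq, Finset.card_univ, Fintype.card_fin,
      nsmul_eq_mul]
    by_cases hj : i = j
    · rw [if_pos hj]; (field_simp; try ring)
    · rw [if_neg hj]; (field_simp; try ring)

lemma M_lr (m : ℕ) (hm : 2 ≤ m) (i : Fin (m+1)) (l' : Fin m) :
    (1 - Vmat2 m * S2 m) (Sum.inl i) (Sum.inr l')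
      = if i = Fin.last m then -1/(m:ℝ) else (if (i:ℕ) = (l':ℕ) then 1/(m:ℝ) else 0) := by
  have h0 : (m:ℝ) ≠ 0 := Nat.cast_ne_zero.mpr (by omega)
  rw [Matrix.sub_apply, Matrix.mul_apply, Fintype.sum_sum_type]
  simp only [V_ll, V_lr, S2_lr, S2_rr]
  rw [sum_scaled]
  simp only [Matrix.one_apply, reduceCtorEq, if_false]
  by_cases hi : i = Fin.last m
  · subst hi
    rw [sum_mask_down_last, sum_deltaplus, if_pos rfl]
    (field_simp; try ring)
  · rw [sum_mask_down m i hi, sum_deltaplus, if_neg hi]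
    have hcp : (i.castPred hi = l') ↔ ((i:ℕ) = (l':ℕ)) := by
      rw [Fin.ext_iff, Fin.coe_castPred]
    by_cases hd : (i:ℕ) = (l':ℕ)
    · rw [if_pos hd, if_pos (hcp.2 hd)]; (field_simp; try ring)
    · rw [if_neg hd, if_neg (fun h => hd (hcp.1 h))]; (field_simp; try ring)

lemma M_rl (m : ℕ) (hm : 2 ≤ m) (l : Fin m) (j : Fin (m+1)) :
    (1 - Vmat2 m * S2 m) (Sum.inr l) (Sum.inl j)
      = if (j:ℕ) = (l:ℕ) then 0 else -1/(m:ℝ) := by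
  have h0 : (m:ℝ) ≠ 0 := Nat.cast_ne_zero.mpr (by omega)
  rw [Matrix.sub_apply, Matrix.mul_apply, Fintype.sum_sum_type]
  simp only [V_rl, V_rr, S2_ll, S2_rl]
  rw [sum_scaled, sum_mask_up, sum_deltaplus]
  simp only [Matrix.one_apply, reduceCtorEq, if_false]
  have hcs : (Fin.castSucc l = j) ↔ ((j:ℕ) = (l:ℕ)) := by
    rw [Fin.ext_iff, Fin.coe_castSucc]
    exact eq_comm
  by_cases hd : (j:ℕ) = (l:ℕ)
  · rw [if_pos hd, if_pos (hcs.2 hd)]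
    push_cast
    (field_simp; try ring)
  · rw [if_neg hd, if_neg (fun h => hd (hcs.1 h))]
    push_cast
    (field_simp; try ring)

lemma M_rr (m : ℕ) (hm : 2 ≤ m) (l l' : Fin m) :
    (1 - Vmat2 m * S2 m) (Sum.inr l) (Sum.inr l') = 0 := by
  have h0 : (m:ℝ) ≠ 0 := Nat.cast_ne_zero.mpr (by omega)
  rw [Matrix.sub_apply, Matrix.mul_apply, Fintype.sum_sum_type]
  simp only [V_rl, V_rr, S2_lr, S2_rr]
  rw [sum_scaled, sum_mask_up]
  rw [Finset.sum_const]
  simp only [Matrix.one_apply, Sum.inr.injEq, Finset.card_univ, Fintype.card_fin,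
    nsmul_eq_mul]
  by_cases hd : l = l'
  · rw [if_pos hd]
    push_cast
    (field_simp; try ring)
  · rw [if_neg hd]
    push_cast
    (field_simp; try ring)

lemma abs_frac_le_frac (a D b E : ℝ) (hD : 0 < D) (hE : 0 < E) (h : |a| * E ≤ b * D) :
    |a / D| ≤ b / E := by
  rw [abs_div, abs_of_pos hD, div_le_div_iff₀ hD hE]
  exact h

set_option maxHeartbeats 2000000 in
lemma bound1 (m : ℕ) (hm : 2 ≤ m) (a b : Fin (m+1) ⊕ Fin m) :
    |((Vmat2 m)⁻¹ - S2 m) a b| ≤ 2/(m:ℝ)^2 := by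
  have hc : (2:ℝ) ≤ (m:ℝ) := by exact_mod_cast hm
  have hc0 : (0:ℝ) < (m:ℝ) := by linarith
  have hc2 : (0:ℝ) < (m:ℝ)^2 := by nlinarith
  have h0 : (m:ℝ) ≠ 0 := ne_of_gt hc0
  have h1 : (m:ℝ) - 1 ≠ 0 := by intro h; nlinarith
  have h2 : (m:ℝ) + 1 ≠ 0 := by intro h; nlinarith
  have hq : (m:ℝ)^2 - 1 ≠ 0 := by intro h; nlinarith
  have hinv : (Vmat2 m)⁻¹ = Wmat m := inv_eq_right_inv (VW m hm)
  rw [hinv]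
  have hzero : (0:ℝ) ≤ 2/(m:ℝ)^2 := by positivity
  rcases a with i | l <;> rcases b with j | l'
  · rw [Matrix.sub_apply, S2_ll]
    simp only [Wmat]
    by_cases hi : i = Fin.last m
    · subst hi
      by_cases hj : j = Fin.last m
      · subst hj
        rw [if_pos rfl, if_pos rfl, if_pos rfl]
        have hval : (2*(m:ℝ)-1)/((m:ℝ)*((m:ℝ)-1)) - ((1+1)/(m:ℝ)) = 1/((m:ℝ)*((m:ℝ)-1)) := by
          field_simp; ring
        rw [hval]
        refine abs_frac_le_frac _ _ _ _ (by nlinarith) hc2 ?_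
        rw [abs_one]; nlinarith
      · rw [if_pos rfl, if_neg hj, if_neg (fun h => hj h.symm)]
        have hval : 1/(m:ℝ) - ((0+1)/(m:ℝ)) = 0 := by ring
        rw [hval, abs_zero]; exact hzero
    · by_cases hj : j = Fin.last m
      · rw [if_neg hi, if_pos hj, if_neg (by rintro rfl; exact hi hj)]
        have hval : 1/(m:ℝ) - ((0+1)/(m:ℝ)) = 0 := by ring
        rw [hval, abs_zero]; exact hzero
      · rw [if_neg hi, if_neg hj]
        by_cases hij : i = j
        · rw [if_pos hij, if_pos hij]
          have hval : ((m:ℝ)^2-(m:ℝ)-1)/((m:ℝ)*((m:ℝ)^2-1)) + (m:ℝ)/((m:ℝ)^2-1)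
              - ((1+1)/(m:ℝ)) = (-1)/((m:ℝ)*((m:ℝ)+1)) := by
            field_simp; ring
          rw [hval]
          refine abs_frac_le_frac _ _ _ _ (by nlinarith) hc2 ?_
          rw [abs_neg, abs_one]; nlinarith
        · rw [if_neg hij, if_neg hij]
          have hval : ((m:ℝ)^2-(m:ℝ)-1)/((m:ℝ)*((m:ℝ)^2-1)) + 0
              - ((0+1)/(m:ℝ)) = (-1)/((m:ℝ)^2-1) := by
            field_simp; ring
          rw [hval]
          refine abs_frac_le_frac _ _ _ _ (by nlinarith) hc2 ?_
          rw [abs_neg, abs_one]; nlinarith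
  · rw [Matrix.sub_apply, S2_lr]
    simp only [Wmat]
    by_cases hi : i = Fin.last m
    · rw [if_pos hi]
      have hval : -1/((m:ℝ)-1) - (-1/(m:ℝ)) = (-1)/((m:ℝ)*((m:ℝ)-1)) := by
        field_simp; ring
      rw [hval]
      refine abs_frac_le_frac _ _ _ _ (by nlinarith) hc2 ?_
      rw [abs_neg, abs_one]; nlinarith
    · rw [if_neg hi]
      by_cases hd : (i:ℕ) = (l':ℕ)
      · rw [if_pos hd]
        have hval : -(m:ℝ)/((m:ℝ)^2-1) + 1/((m:ℝ)^2-1) - (-1/(m:ℝ))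
            = 1/((m:ℝ)*((m:ℝ)+1)) := by
          field_simp; ring
        rw [hval]
        refine abs_frac_le_frac _ _ _ _ (by nlinarith) hc2 ?_
        rw [abs_one]; nlinarith
      · rw [if_neg hd]
        have hval : -(m:ℝ)/((m:ℝ)^2-1) + 0 - (-1/(m:ℝ))
            = (-1)/((m:ℝ)*((m:ℝ)^2-1)) := by
          field_simp; ring
        rw [hval]
        refine abs_frac_le_frac _ _ _ _ (by nlinarith) hc2 ?_
        rw [abs_neg, abs_one]; nlinarith
  · rw [Matrix.sub_apply, S2_rl]
    simp only [Wmat]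
    by_cases hj : j = Fin.last m
    · rw [if_pos hj]
      have hval : -1/((m:ℝ)-1) - (-1/(m:ℝ)) = (-1)/((m:ℝ)*((m:ℝ)-1)) := by
        field_simp; ring
      rw [hval]
      refine abs_frac_le_frac _ _ _ _ (by nlinarith) hc2 ?_
      rw [abs_neg, abs_one]; nlinarith
    · rw [if_neg hj]
      by_cases hd : (j:ℕ) = (l:ℕ)
      · rw [if_pos hd]
        have hval : -(m:ℝ)/((m:ℝ)^2-1) + 1/((m:ℝ)^2-1) - (-1/(m:ℝ))
            = 1/((m:ℝ)*((m:ℝ)+1)) := by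
          field_simp; ring
        rw [hval]
        refine abs_frac_le_frac _ _ _ _ (by nlinarith) hc2 ?_
        rw [abs_one]; nlinarith
      · rw [if_neg hd]
        have hval : -(m:ℝ)/((m:ℝ)^2-1) + 0 - (-1/(m:ℝ))
            = (-1)/((m:ℝ)*((m:ℝ)^2-1)) := by
          field_simp; ring
        rw [hval]
        refine abs_frac_le_frac _ _ _ _ (by nlinarith) hc2 ?_
        rw [abs_neg, abs_one]; nlinarith
  · rw [Matrix.sub_apply, S2_rr]
    simp only [Wmat]
    by_cases hd : l = l'
    · rw [if_pos hd, if_pos hd]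
      have hval : (m:ℝ)/((m:ℝ)^2-1) + (m:ℝ)/((m:ℝ)^2-1) - ((1+1)/(m:ℝ))
          = 2/((m:ℝ)*((m:ℝ)^2-1)) := by
        field_simp; ring
      rw [hval]
      refine abs_frac_le_frac _ _ _ _ (by nlinarith) hc2 ?_
      rw [abs_two]; nlinarith
    · rw [if_neg hd, if_neg hd]
      have hval : (m:ℝ)/((m:ℝ)^2-1) + 0 - ((0+1)/(m:ℝ))
          = 1/((m:ℝ)*((m:ℝ)^2-1)) := by
        field_simp; ring
      rw [hval]
      refine abs_frac_le_frac _ _ _ _ (by nlinarith) hc2 ?_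
      rw [abs_one]; nlinarith

lemma Mbound (m : ℕ) (hm : 2 ≤ m) (z b : Fin (m+1) ⊕ Fin m) :
    |(1 - Vmat2 m * S2 m) z b| ≤ 1/(m:ℝ) := by
  have hc : (2:ℝ) ≤ (m:ℝ) := by exact_mod_cast hm
  have hc0 : (0:ℝ) < (m:ℝ) := by linarith
  have hb : |(-1)/(m:ℝ)| ≤ 1/(m:ℝ) := by
    rw [abs_div, abs_neg, abs_one, abs_of_pos hc0]
  have hb1 : |1/(m:ℝ)| ≤ 1/(m:ℝ) := by
    rw [abs_div, abs_one, abs_of_pos hc0]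
  have hb0 : |(0:ℝ)| ≤ 1/(m:ℝ) := by
    rw [abs_zero]; positivity
  rcases z with i | l <;> rcases b with j | l'
  · rw [M_ll m hm]; split_ifs <;> assumption
  · rw [M_lr m hm]; split_ifs <;> assumption
  · rw [M_rl m hm]; split_ifs <;> assumption
  · rw [M_rr m hm]; exact hb0

lemma Msum_ll (m : ℕ) (hm : 2 ≤ m) (j : Fin (m+1)) :
    ∑ k : Fin (m+1), (1 - Vmat2 m * S2 m) (Sum.inl k) (Sum.inl j) = -1 := by
  have h0 : (m:ℝ) ≠ 0 := Nat.cast_ne_zero.mpr (by omega)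
  rw [Fin.sum_univ_castSucc]
  simp only [M_ll m hm, castSucc_ne_last, if_false, if_pos rfl, if_true, Finset.sum_const,
    Finset.card_univ, Fintype.card_fin, nsmul_eq_mul]
  field_simp
  ring

lemma Msum_lr (m : ℕ) (hm : 2 ≤ m) (l' : Fin m) :
    ∑ k : Fin (m+1), (1 - Vmat2 m * S2 m) (Sum.inl k) (Sum.inr l') = 0 := by
  rw [Fin.sum_univ_castSucc]
  simp only [M_lr m hm, castSucc_ne_last, if_false, if_pos rfl]
  have hcond : ∀ k : Fin m, ((Fin.castSucc k : ℕ) = (l':ℕ)) ↔ k = l' := by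
    intro k; rw [Fin.coe_castSucc, ← Fin.ext_iff]
  simp only [hcond]
  rw [Finset.sum_ite_eq' Finset.univ l']
  simp only [Finset.mem_univ, if_true]
  have h0 : (m:ℝ) ≠ 0 := Nat.cast_ne_zero.mpr (by omega)
  field_simp
  ring

lemma Msum_rl (m : ℕ) (hm : 2 ≤ m) (j : Fin (m+1)) :
    ∑ l : Fin m, (1 - Vmat2 m * S2 m) (Sum.inr l) (Sum.inl j)
      = if j = Fin.last m then -1 else -((m:ℝ)-1)/(m:ℝ) := by
  have h0 : (m:ℝ) ≠ 0 := Nat.cast_ne_zero.mpr (by omega)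
  simp only [M_rl m hm]
  have h : ∀ l : Fin m, (if (j:ℕ) = (l:ℕ) then (0:ℝ) else -1/(m:ℝ))
      = (if (j:ℕ) = (l:ℕ) then (0:ℝ) else 1) * (-1/(m:ℝ)) := by
    intro l; split <;> ring
  rw [Finset.sum_congr rfl (fun l _ => h l)]
  by_cases hj : j = Fin.last m
  · subst hj
    rw [sum_mask_down_last, Finset.sum_const]
    simp only [Finset.card_univ, Fintype.card_fin, nsmul_eq_mul, if_pos rfl, if_true]
    field_simp
  · rw [sum_mask_down m j hj, Finset.sum_const, if_neg hj]
    simp only [Finset.card_univ, Fintype.card_fin, nsmul_eq_mul]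
    field_simp
    ring

lemma sum_deltaplus_mul {N : ℕ} (i : Fin N) (cr : ℝ) (g : Fin N → ℝ) :
    ∑ k : Fin N, ((if i = k then (1:ℝ) else 0)+1)/cr * g k
      = (∑ k, g k)/cr + g i / cr := by
  have h : ∀ k : Fin N, ((if i = k then (1:ℝ) else 0)+1)/cr * g k
      = g k/cr + (if i = k then g k/cr else 0) := by
    intro k; split <;> ring
  rw [Finset.sum_congr rfl (fun k _ => h k), Finset.sum_add_distrib,
    Finset.sum_ite_eq Finset.univ i, ← Finset.sum_div]
  simp

lemma bound_of_mul (m : ℕ) (hm : 2 ≤ m) (X v : ℝ) (h : X*(m:ℝ)^2 = v) (hv : |v| ≤ 2) :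
    |X| ≤ 2/(m:ℝ)^2 := by
  have hc : (2:ℝ) ≤ (m:ℝ) := by exact_mod_cast hm
  have hc2 : (0:ℝ) < (m:ℝ)^2 := by nlinarith
  have hX : X = v/(m:ℝ)^2 := by rw [eq_div_iff (ne_of_gt hc2)]; exact h
  rw [hX, abs_div, abs_of_pos hc2, div_le_div_iff₀ hc2 hc2]
  exact mul_le_mul_of_nonneg_right hv hc2.le

lemma bound2 (m : ℕ) (hm : 2 ≤ m) (a b : Fin (m+1) ⊕ Fin m) :
    |(S2 m * (1 - Vmat2 m * S2 m)) a b| ≤ 2/(m:ℝ)^2 := by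
  have hc : (2:ℝ) ≤ (m:ℝ) := by exact_mod_cast hm
  have h0 : (m:ℝ) ≠ 0 := by intro h; rw [h] at hc; norm_num at hc
  rw [Matrix.mul_apply, Fintype.sum_sum_type]
  rcases a with i | l <;> rcases b with j | l'
  · simp only [S2_ll, S2_lr]
    rw [sum_deltaplus_mul, Msum_ll m hm, ← Finset.mul_sum, Msum_rl m hm, M_ll m hm]
    by_cases hi : i = Fin.last m
    · rw [if_pos hi]
      by_cases hj : j = Fin.last m
      · rw [if_pos hj]
        exact bound_of_mul m hm _ 0 (by field_simp; ring) (by norm_num)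
      · rw [if_neg hj]
        exact bound_of_mul m hm _ (-1) (by field_simp; ring) (by norm_num)
    · rw [if_neg hi]
      by_cases hj : j = Fin.last m
      · rw [if_pos hj]
        exact bound_of_mul m hm _ (-1) (by field_simp; ring) (by norm_num)
      · rw [if_neg hj]
        exact bound_of_mul m hm _ (-2) (by field_simp; ring) (by norm_num)
  · simp only [S2_ll, S2_lr, M_rr m hm, mul_zero, Finset.sum_const, smul_zero]
    rw [sum_deltaplus_mul, Msum_lr m hm, M_lr m hm]
    by_cases hi : i = Fin.last m
    · rw [if_pos hi]
      exact bound_of_mul m hm _ (-1) (by field_simp; ring) (by norm_num)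
    · rw [if_neg hi]
      by_cases hd : (i:ℕ) = (l':ℕ)
      · rw [if_pos hd]
        exact bound_of_mul m hm _ 1 (by field_simp; ring) (by norm_num)
      · rw [if_neg hd]
        exact bound_of_mul m hm _ 0 (by field_simp; ring) (by norm_num)
  · simp only [S2_rl, S2_rr]
    rw [← Finset.mul_sum, Msum_ll m hm, sum_deltaplus_mul, Msum_rl m hm, M_rl m hm]
    by_cases hj : j = Fin.last m
    · have hd : ¬((j:ℕ) = (l:ℕ)) := by
        subst hj; simp only [Fin.val_last]; omega
      rw [if_pos hj, if_neg hd]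
      exact bound_of_mul m hm _ (-1) (by field_simp; try ring; try tauto) (by norm_num)
    · rw [if_neg hj]
      by_cases hd : (j:ℕ) = (l:ℕ)
      · rw [if_pos hd]
        exact bound_of_mul m hm _ 1 (by field_simp; ring) (by norm_num)
      · rw [if_neg hd]
        exact bound_of_mul m hm _ 0 (by field_simp; ring) (by norm_num)
  · simp only [S2_rl, S2_rr, M_rr m hm, mul_zero, Finset.sum_const, smul_zero, add_zero]
    rw [← Finset.mul_sum, Msum_lr m hm]
    exact bound_of_mul m hm _ 0 (by field_simp; ring) (by norm_num)

lemma bound3 (m : ℕ) (hm : 2 ≤ m) (a b : Fin (m+1) ⊕ Fin m) :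
    |(((Vmat2 m)⁻¹ - S2 m) * (1 - Vmat2 m * S2 m)) a b| ≤ 6/(m:ℝ)^2 := by
  have hc : (2:ℝ) ≤ (m:ℝ) := by exact_mod_cast hm
  have hc0 : (0:ℝ) < (m:ℝ) := by linarith
  have hc2 : (0:ℝ) < (m:ℝ)^2 := by nlinarith
  rw [Matrix.mul_apply]
  have hterm : ∀ z : Fin (m+1) ⊕ Fin m,
      |((Vmat2 m)⁻¹ - S2 m) a z * (1 - Vmat2 m * S2 m) z b| ≤ (2/(m:ℝ)^2) * (1/(m:ℝ)) := by
    intro z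
    rw [abs_mul]
    exact mul_le_mul (bound1 m hm a z) (Mbound m hm z b) (abs_nonneg _)
      (by positivity)
  calc |∑ z, ((Vmat2 m)⁻¹ - S2 m) a z * (1 - Vmat2 m * S2 m) z b|
      ≤ ∑ z, |((Vmat2 m)⁻¹ - S2 m) a z * (1 - Vmat2 m * S2 m) z b| :=
        Finset.abs_sum_le_sum_abs _ _
    _ ≤ ∑ _z : Fin (m+1) ⊕ Fin m, (2/(m:ℝ)^2) * (1/(m:ℝ)) :=
        Finset.sum_le_sum (fun z _ => hterm z)
    _ = ((2*m+1 : ℕ):ℝ) * ((2/(m:ℝ)^2) * (1/(m:ℝ))) := by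
        rw [Finset.sum_const, Finset.card_univ, nsmul_eq_mul]
        congr 1
        simp [Fintype.card_sum]
        push_cast
        ring
    _ ≤ 6/(m:ℝ)^2 := by
        have h1 : ((2*m+1 : ℕ):ℝ) * ((2/(m:ℝ)^2) * (1/(m:ℝ))) = (4*(m:ℝ)+2)/((m:ℝ)^2*(m:ℝ)) := by
          push_cast
          field_simp
          ring
        rw [h1, div_le_div_iff₀ (by nlinarith) hc2]
        nlinarith

theorem stmt18 :
    ∃ C₀ C : ℝ, 0 < C₀ ∧ 0 < C ∧ ∀ n : ℕ, 3 ≤ n →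
      (∀ a b : Fin n ⊕ Fin (n - 1),
        |((Vmat n)⁻¹ - breveS n) a b| ≤ C₀ / ((n : ℝ) - 1) ^ 2) ∧
      (∀ a b : Fin n ⊕ Fin (n - 1),
        |(breveS n * (1 - Vmat n * breveS n)) a b| ≤ 2 / ((n : ℝ) - 1) ^ 2) ∧
      (∀ a b : Fin n ⊕ Fin (n - 1),
        |(((Vmat n)⁻¹ - breveS n) * (1 - Vmat n * breveS n)) a b| ≤ C / ((n : ℝ) - 1) ^ 2) := by
  refine ⟨2, 6, by norm_num, by norm_num, ?_⟩
  intro n hn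
  obtain ⟨m, rfl⟩ : ∃ m, n = m + 1 := ⟨n - 1, by omega⟩
  have hm : 2 ≤ m := by omega
  have hcast : ((m+1:ℕ):ℝ) - 1 = (m:ℝ) := by push_cast; ring
  refine ⟨?_, ?_, ?_⟩ <;> intro a b <;> rw [hcast]
  · exact bound1 m hm a b
  · exact bound2 m hm a b
  · exact bound3 m hm a b
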